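/- The function f_max(x) = (2√3/π)·log(2 cosh((π/(2√3))·x)) is 1-Lipschitz, satisfies f_max(x) > |x| for all x, ∫_ℝ (f_max(x) - |x|) dx = 1, and F(f_max) = ∫_ℝ φ(f_max'(x)) dx = π/√3, where φ(x) = log 2 - (1/2)((1+x)log(1+x)+(1-x)log(1-x)). -/

import Mathlib

open MeasureTheory Real Set Filter Topology

lemma my_integral_exp_Ioi {b : ℝ} (hb : 0 < b) :
    ∫ u in Ioi (0:ℝ), Real.exp (-(b*u)) = b⁻¹ := by
  have := integral_comp_mul_left_Ioi (fun x => Real.exp (-x)) 0 hb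
  simp only [mul_zero, integral_exp_neg_Ioi, neg_zero, Real.exp_zero, smul_eq_mul, mul_one] at this
  simpa using this

lemma my_integrableOn_exp_Ioi {b : ℝ} (hb : 0 < b) :
    IntegrableOn (fun u : ℝ => Real.exp (-(b*u))) (Ioi (0:ℝ)) := by
  have := exp_neg_integrableOn_Ioi 0 hb
  simpa [neg_mul] using this

lemma my_integrable_comp_abs {f : ℝ → ℝ} (hf : IntegrableOn (fun x => f |x|) (Ioi 0)) :
    Integrable (fun x => f |x|) := by
  have int_Iic : IntegrableOn (fun x ↦ f |x|) (Iic 0) := by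
    rw [← Measure.map_neg_eq_self (volume : Measure ℝ)]
    let m : MeasurableEmbedding fun x : ℝ => -x := (Homeomorph.neg ℝ).measurableEmbedding
    rw [m.integrableOn_map_iff]
    simp_rw [Function.comp_def, abs_neg, neg_preimage, neg_Iic, neg_zero]
    exact Iff.mpr integrableOn_Ici_iff_integrableOn_Ioi hf
  have := int_Iic.union hf
  rwa [Iic_union_Ioi, integrableOn_univ] at this

lemma sum_inv_sq_succ (a : ℝ) (ha : 0 < a) :
    HasSum (fun n : ℕ => (((n:ℝ)+1))⁻¹ * (a*((n:ℝ)+1))⁻¹) (π^2/(6*a)) := by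
  have h0 : HasSum (fun n : ℕ => (1:ℝ) / (n : ℝ)^2) (π^2/6) := hasSum_zeta_two
  have h1 : HasSum (fun n : ℕ => (1:ℝ) / ((n : ℝ)+1)^2) (π^2/6) := by
    have := (hasSum_nat_add_iff' (f := fun n : ℕ => (1:ℝ) / (n : ℝ)^2)
      (g := π^2/6) 1).mpr h0
    have h' : ∀ n : ℕ, (1:ℝ) / ((n:ℕ)+1 : ℕ)^2 = 1 / ((n : ℝ)+1)^2 := by
      intro n; push_cast; ring
    simpa [h'] using this
  have h2 := h1.div_const a
  have heq : (fun n : ℕ => (((n:ℝ)+1))⁻¹ * (a*((n:ℝ)+1))⁻¹)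
      = fun n : ℕ => 1/((n:ℝ)+1)^2/a := by
    funext n
    have : ((n:ℝ)+1) ≠ 0 := by positivity
    field_simp
  rw [heq, show π^2/(6*a) = π^2/6/a by ring]
  exact h2

-- key lintegral computation
lemma key_lintegral (a : ℝ) (ha : 0 < a) :
    ∫⁻ u in Ioi (0:ℝ), ENNReal.ofReal (-Real.log (1 - Real.exp (-(a*u))))
      = ENNReal.ofReal (π^2/(6*a)) := by
  have hmeas : ∀ n : ℕ, AEMeasurable
      (fun u : ℝ => ENNReal.ofReal ((((n:ℝ)+1))⁻¹ * Real.exp (-(a*((n:ℝ)+1)*u))))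
      (volume.restrict (Ioi (0:ℝ))) := by
    intro n
    exact (ENNReal.measurable_ofReal.comp
      ((measurable_const.mul ((measurable_const.mul measurable_id').neg.exp)))).aemeasurable
  calc ∫⁻ u in Ioi (0:ℝ), ENNReal.ofReal (-Real.log (1 - Real.exp (-(a*u))))
      = ∫⁻ u in Ioi (0:ℝ), ∑' n : ℕ,
          ENNReal.ofReal ((((n:ℝ)+1))⁻¹ * Real.exp (-(a*((n:ℝ)+1)*u))) := by
        apply setLIntegral_congr_fun measurableSet_Ioi
        intro u hu
        beta_reduce
        have hx0 : 0 < Real.exp (-(a*u)) := Real.exp_pos _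
        have hx1 : Real.exp (-(a*u)) < 1 := by
          rw [Real.exp_lt_one_iff]
          nlinarith [mul_pos ha hu]
        have habs : |Real.exp (-(a*u))| < 1 := by rwa [abs_of_pos hx0]
        have hs := hasSum_pow_div_log_of_abs_lt_one habs
        have hs' : HasSum (fun n : ℕ => (((n:ℝ)+1))⁻¹ * Real.exp (-(a*((n:ℝ)+1)*u)))
            (-Real.log (1 - Real.exp (-(a*u)))) := by
          convert hs using 2 with n
          rw [← Real.exp_nat_mul]
          push_cast
          rw [div_eq_inv_mul]
          ring_nf
        rw [← hs'.tsum_eq, ENNReal.ofReal_tsum_of_nonneg]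
        · intro n
          positivity
        · exact hs'.summable
    _ = ∑' n : ℕ, ∫⁻ u in Ioi (0:ℝ),
          ENNReal.ofReal ((((n:ℝ)+1))⁻¹ * Real.exp (-(a*((n:ℝ)+1)*u))) :=
        lintegral_tsum hmeas
    _ = ∑' n : ℕ, ENNReal.ofReal ((((n:ℝ)+1))⁻¹ * (a*((n:ℝ)+1))⁻¹) := by
        congr 1
        funext n
        have hb : 0 < a*((n:ℝ)+1) := by positivity
        have hint : IntegrableOn (fun u : ℝ => (((n:ℝ)+1))⁻¹ * Real.exp (-(a*((n:ℝ)+1)*u)))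
            (Ioi (0:ℝ)) := (my_integrableOn_exp_Ioi hb).const_mul _
        rw [← ofReal_integral_eq_lintegral_ofReal hint]
        · rw [MeasureTheory.integral_const_mul, my_integral_exp_Ioi hb]
        · filter_upwards with u
          positivity
    _ = ENNReal.ofReal (π^2/(6*a)) := by
        rw [← ENNReal.ofReal_tsum_of_nonneg (fun n => by positivity)
            (sum_inv_sq_succ a ha).summable, (sum_inv_sq_succ a ha).tsum_eq]

lemma key_nonneg {a : ℝ} (ha : 0 < a) :
    ∀ u ∈ Ioi (0:ℝ), 0 ≤ -Real.log (1 - Real.exp (-(a*u))) := by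
  intro u hu
  have h1 : Real.exp (-(a*u)) < 1 := by
    rw [Real.exp_lt_one_iff]
    simp only [mem_Ioi] at hu
    nlinarith [mul_pos ha hu]
  have h2 : (0:ℝ) < 1 - Real.exp (-(a*u)) := by linarith
  have := Real.log_nonpos h2.le (by linarith [Real.exp_pos (-(a*u))])
  linarith

lemma key_meas (a : ℝ) :
    AEStronglyMeasurable (fun u : ℝ => -Real.log (1 - Real.exp (-(a*u))))
      (volume.restrict (Ioi (0:ℝ))) := by
  apply Measurable.aestronglyMeasurable
  exact ((Real.measurable_log.comp ((measurable_const.sub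
    ((measurable_const.mul measurable_id').neg.exp)))).neg)

lemma keyB_integrable (a : ℝ) (ha : 0 < a) :
    IntegrableOn (fun u : ℝ => -Real.log (1 - Real.exp (-(a*u)))) (Ioi (0:ℝ)) := by
  refine ⟨key_meas a, ?_⟩
  rw [hasFiniteIntegral_iff_norm]
  have : ∫⁻ u in Ioi (0:ℝ), ENNReal.ofReal ‖-Real.log (1 - Real.exp (-(a*u)))‖
      = ENNReal.ofReal (π^2/(6*a)) := by
    rw [← key_lintegral a ha]
    apply setLIntegral_congr_fun measurableSet_Ioi
    intro u hu
    beta_reduce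
    rw [Real.norm_eq_abs, abs_of_nonneg (key_nonneg ha u hu)]
  rw [this]
  exact ENNReal.ofReal_lt_top

lemma keyB_integral (a : ℝ) (ha : 0 < a) :
    ∫ u in Ioi (0:ℝ), -Real.log (1 - Real.exp (-(a*u))) = π^2/(6*a) := by
  rw [integral_eq_lintegral_of_nonneg_ae]
  · rw [key_lintegral a ha, ENNReal.toReal_ofReal (by positivity)]
  · exact (ae_restrict_iff' measurableSet_Ioi).2 (Eventually.of_forall (key_nonneg ha))
  · exact key_meas a

lemma log_one_add_exp_eq (u : ℝ) (hu : 0 < u) :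
    Real.log (1 + Real.exp (-(2*u)))
      = -Real.log (1 - Real.exp (-(2*u))) - -Real.log (1 - Real.exp (-(4*u))) := by
  have hx0 : 0 < Real.exp (-(2*u)) := Real.exp_pos _
  have hx1 : Real.exp (-(2*u)) < 1 := by rw [Real.exp_lt_one_iff]; nlinarith
  set x := Real.exp (-(2*u)) with hx
  have hsq : Real.exp (-(4*u)) = x^2 := by
    rw [hx, ← Real.exp_nat_mul]; norm_num; ring_nf
  rw [hsq]
  have h1 : (0:ℝ) < 1 - x := by linarith
  have h2 : (0:ℝ) < 1 - x^2 := by nlinarith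
  have key : (1:ℝ) + x = (1 - x^2)/(1-x) := by field_simp; ring
  rw [key, Real.log_div (by positivity) (by positivity)]
  ring

lemma intC : IntegrableOn (fun u : ℝ => Real.log (1 + Real.exp (-(2*u)))) (Ioi (0:ℝ)) ∧
    ∫ u in Ioi (0:ℝ), Real.log (1 + Real.exp (-(2*u))) = π^2/24 := by
  have h2 := keyB_integrable 2 two_pos
  have h4 := keyB_integrable 4 four_pos
  have hsub : IntegrableOn (fun u : ℝ => -Real.log (1 - Real.exp (-(2*u)))
      - -Real.log (1 - Real.exp (-(4*u)))) (Ioi (0:ℝ)) := h2.sub h4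
  have heq : EqOn (fun u : ℝ => -Real.log (1 - Real.exp (-(2*u))) - -Real.log (1 - Real.exp (-(4*u))))
      (fun u : ℝ => Real.log (1 + Real.exp (-(2*u)))) (Ioi 0) := by
    intro u hu
    simp only
    rw [log_one_add_exp_eq u hu]
  constructor
  · exact hsub.congr_fun heq measurableSet_Ioi
  · rw [← setIntegral_congr_fun measurableSet_Ioi heq,
      integral_sub h2 h4, keyB_integral 2 two_pos, keyB_integral 4 four_pos]
    ring

-- L1
lemma log_two_cosh_eq (u : ℝ) :
    Real.log (2 * Real.cosh u) = |u| + Real.log (1 + Real.exp (-(2*|u|))) := by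
  have h : 2 * Real.cosh u = Real.exp |u| * (1 + Real.exp (-(2*|u|))) := by
    rw [← Real.cosh_abs, Real.cosh_eq]
    have : Real.exp |u| * Real.exp (-(2*|u|)) = Real.exp (-|u|) := by
      rw [← Real.exp_add]; ring_nf
    nlinarith [this]
  rw [h, Real.log_mul (Real.exp_ne_zero _) (by positivity), Real.log_exp]

lemma abs_tanh_le (t : ℝ) : |Real.tanh t| ≤ 1 := by
  rw [Real.tanh_eq_sinh_div_cosh, abs_div, abs_of_pos (Real.cosh_pos t),
    div_le_one (Real.cosh_pos t)]
  rw [abs_le]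
  constructor
  · have := Real.sinh_lt_cosh (-t)
    rw [Real.sinh_neg, Real.cosh_neg] at this
    linarith
  · exact (Real.sinh_lt_cosh t).le

lemma u_tanh_eq (u : ℝ) : u * Real.tanh u = |u| * Real.tanh |u| := by
  rcases abs_cases u with ⟨h1, _⟩ | ⟨h1, _⟩
  · rw [h1]
  · rw [h1, Real.tanh_neg]; ring

lemma one_sub_tanh_le {t : ℝ} (ht : 0 ≤ t) : 1 - Real.tanh t ≤ 2 * Real.exp (-(2*t)) := by
  have hc := Real.cosh_pos t
  have h1 : 1 - Real.tanh t = Real.exp (-t) / Real.cosh t := by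
    rw [Real.tanh_eq_sinh_div_cosh]
    rw [← Real.cosh_sub_sinh t]
    field_simp
  rw [h1, div_le_iff₀ hc]
  have h2 : Real.exp (-(2*t)) * Real.exp t = Real.exp (-t) := by
    rw [← Real.exp_add]; ring_nf
  have h3 : (0:ℝ) < Real.exp (-(2*t)) * Real.exp (-t) := by positivity
  rw [Real.cosh_eq]
  nlinarith

lemma G_nonneg (u : ℝ) : 0 ≤ Real.log (1 + Real.exp (-(2*|u|))) :=
  Real.log_nonneg (by nlinarith [Real.exp_pos (-(2*|u|))])

lemma G_le (u : ℝ) : Real.log (1 + Real.exp (-(2*|u|))) ≤ Real.exp (-(2*|u|)) := by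
  have := Real.log_le_sub_one_of_pos (x := 1 + Real.exp (-(2*|u|))) (by positivity)
  linarith

lemma H_nonneg (u : ℝ) : 0 ≤ Real.log (2 * Real.cosh u) - u * Real.tanh u := by
  have h1 : u * Real.tanh u ≤ |u| := by
    calc u * Real.tanh u ≤ |u * Real.tanh u| := le_abs_self _
    _ = |u| * |Real.tanh u| := abs_mul _ _
    _ ≤ |u| * 1 := by
        apply mul_le_mul_of_nonneg_left (abs_tanh_le u) (abs_nonneg u)
    _ = |u| := mul_one _
  have h2 := G_nonneg u
  rw [log_two_cosh_eq u]
  linarith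

lemma t_exp_le (t : ℝ) (ht : 0 ≤ t) : t * Real.exp (-t) ≤ 1 := by
  have h1 : t ≤ Real.exp t := by linarith [Real.add_one_le_exp t]
  have h2 : Real.exp t * Real.exp (-t) = 1 := by rw [← Real.exp_add]; simp
  nlinarith [Real.exp_pos (-t)]

lemma H_le (u : ℝ) :
    Real.log (2 * Real.cosh u) - u * Real.tanh u ≤ 3 * Real.exp (-|u|) := by
  set t := |u| with htdef
  have ht : 0 ≤ t := abs_nonneg u
  have h1 : Real.log (2 * Real.cosh u) - u * Real.tanh u
      = Real.log (1 + Real.exp (-(2*t))) + t * (1 - Real.tanh t) := by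
    rw [log_two_cosh_eq u, u_tanh_eq u]; ring
  rw [h1]
  have h2 : Real.log (1 + Real.exp (-(2*t))) ≤ Real.exp (-(2*t)) := G_le u
  have h3 : t * (1 - Real.tanh t) ≤ t * (2 * Real.exp (-(2*t))) :=
    mul_le_mul_of_nonneg_left (one_sub_tanh_le ht) ht
  have h4 : Real.exp (-(2*t)) ≤ Real.exp (-t) := Real.exp_le_exp.2 (by linarith)
  have h5 : t * (2 * Real.exp (-(2*t))) ≤ 2 * Real.exp (-t) := by
    have he : Real.exp (-(2*t)) = Real.exp (-t) * Real.exp (-t) := by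
      rw [← Real.exp_add]; ring_nf
    have := t_exp_le t ht
    nlinarith [Real.exp_pos (-t)]
  linarith

-- derivative of v * |v|
lemma hasDerivAt_mul_abs (u : ℝ) : HasDerivAt (fun v : ℝ => v * |v|) (2 * |u|) u := by
  rcases lt_trichotomy u 0 with hu | hu | hu
  · have hd : HasDerivAt (fun v : ℝ => -(v * v)) (2 * |u|) u := by
      have := ((hasDerivAt_id u).mul (hasDerivAt_id u)).neg
      simp only [id_eq, one_mul, mul_one] at this
      exact this.congr_deriv (by rw [abs_of_neg hu]; ring)
    apply hd.congr_of_eventuallyEq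
    filter_upwards [eventually_lt_nhds hu] with v hv
    rw [abs_of_neg hv]; ring
  · subst hu
    rw [hasDerivAt_iff_tendsto_slope]
    have : Tendsto (fun v : ℝ => |v|) (𝓝[≠] (0:ℝ)) (𝓝 0) :=
      (continuous_abs.tendsto' 0 0 abs_zero).mono_left nhdsWithin_le_nhds
    simp only [abs_zero, mul_zero, zero_mul]
    apply Tendsto.congr' _ this
    filter_upwards [self_mem_nhdsWithin] with v hv
    have hv' : v ≠ 0 := hv
    rw [slope_def_field]
    field_simp
    ring
  · have hd : HasDerivAt (fun v : ℝ => v * v) (2 * |u|) u := by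
      have := (hasDerivAt_id u).mul (hasDerivAt_id u)
      simp only [id_eq, one_mul, mul_one] at this
      exact this.congr_deriv (by rw [abs_of_pos hu]; ring)
    apply hd.congr_of_eventuallyEq
    filter_upwards [eventually_gt_nhds hu] with v hv
    rw [abs_of_pos hv]

lemma hasDerivAt_log_two_cosh (c v : ℝ) :
    HasDerivAt (fun w : ℝ => Real.log (2 * Real.cosh (c * w))) (c * Real.tanh (c * v)) v := by
  have h0 : HasDerivAt (fun w : ℝ => c * w) c v := by
    simpa using (hasDerivAt_id v).const_mul c
  have h1 : HasDerivAt (fun w : ℝ => 2 * Real.cosh (c * w)) (2 * Real.sinh (c*v) * c) v :=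
    (((Real.hasDerivAt_cosh (c*v)).comp v h0).const_mul 2).congr_deriv (by ring)
  have hne : 2 * Real.cosh (c*v) ≠ 0 := by positivity
  have h2 := (Real.hasDerivAt_log hne).comp v h1
  refine h2.congr_deriv ?_
  rw [Real.tanh_eq_sinh_div_cosh]
  field_simp

lemma hasDerivAt_uG (u : ℝ) :
    HasDerivAt (fun v : ℝ => v * (Real.log (2 * Real.cosh v) - |v|))
      (2 * (Real.log (2 * Real.cosh u) - |u|)
        - (Real.log (2 * Real.cosh u) - u * Real.tanh u)) u := by
  have hlog : HasDerivAt (fun w : ℝ => Real.log (2 * Real.cosh w)) (Real.tanh u) u := by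
    have := hasDerivAt_log_two_cosh 1 u
    simpa using this
  have h1 : HasDerivAt (fun v : ℝ => v * Real.log (2 * Real.cosh v))
      (Real.log (2 * Real.cosh u) + u * Real.tanh u) u := by
    have h := (hasDerivAt_id u).mul hlog
    simp only [id_eq, one_mul] at h
    exact h.congr_deriv (by ring)
  have h2 := hasDerivAt_mul_abs u
  have h3 := h1.sub h2
  have hfun : (fun v : ℝ => v * Real.log (2 * Real.cosh v) - v * |v|)
      = fun v : ℝ => v * (Real.log (2 * Real.cosh v) - |v|) := by
    funext v; ring
  simp only [Pi.sub_def] at h3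
  rw [hfun] at h3
  exact h3.congr_deriv (by ring)

lemma tendsto_uG_atTop :
    Tendsto (fun u : ℝ => u * (Real.log (2 * Real.cosh u) - |u|)) atTop (𝓝 0) := by
  have hbound : Tendsto (fun u : ℝ => u * Real.exp (-(2*u))) atTop (𝓝 0) := by
    have h1 := Real.tendsto_pow_mul_exp_neg_atTop_nhds_zero 1
    have h2 : Tendsto (fun u : ℝ => 2 * u) atTop atTop :=
      (tendsto_id.const_mul_atTop two_pos)
    have h3 := (h1.comp h2)
    have h4 := h3.const_mul (1/2 : ℝ)
    simp only [mul_zero] at h4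
    apply h4.congr
    intro u
    simp only [Function.comp_apply, pow_one]
    ring_nf
  apply squeeze_zero' (g := fun u : ℝ => u * Real.exp (-(2*u)))
  · filter_upwards [eventually_ge_atTop (0:ℝ)] with u hu
    have := G_nonneg u
    rw [log_two_cosh_eq u]
    have : 0 ≤ Real.log (1 + Real.exp (-(2*|u|))) := G_nonneg u
    nlinarith
  · filter_upwards [eventually_ge_atTop (0:ℝ)] with u hu
    rw [log_two_cosh_eq u, abs_of_nonneg hu]
    have h1 : Real.log (1 + Real.exp (-(2*u))) ≤ Real.exp (-(2*u)) := by
      have := G_le u; rwa [abs_of_nonneg hu] at this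
    nlinarith [G_le u, abs_of_nonneg hu]
  · exact hbound

lemma tendsto_uG_atBot :
    Tendsto (fun u : ℝ => u * (Real.log (2 * Real.cosh u) - |u|)) atBot (𝓝 0) := by
  have h := (tendsto_uG_atTop.comp tendsto_neg_atBot_atTop).neg
  simp only [neg_zero] at h
  apply h.congr
  intro u
  simp only [Function.comp_apply, Real.cosh_neg, abs_neg]
  ring

lemma integrable_exp_neg_abs' : Integrable (fun u : ℝ => Real.exp (-|u|)) := by
  apply my_integrable_comp_abs (f := fun t : ℝ => Real.exp (-t))
  apply (my_integrableOn_exp_Ioi one_pos).congr_fun _ measurableSet_Ioi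
  intro x hx
  simp only [one_mul, abs_of_pos (mem_Ioi.1 hx)]

lemma integrable_G : Integrable (fun u : ℝ => Real.log (1 + Real.exp (-(2*|u|)))) := by
  apply my_integrable_comp_abs (f := fun t : ℝ => Real.log (1 + Real.exp (-(2*t))))
  apply intC.1.congr_fun _ measurableSet_Ioi
  intro x hx
  simp only [abs_of_pos (mem_Ioi.1 hx)]

lemma integral_G : ∫ u : ℝ, Real.log (1 + Real.exp (-(2*|u|))) = π^2/12 := by
  rw [integral_comp_abs (f := fun t : ℝ => Real.log (1 + Real.exp (-(2*t)))), intC.2]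
  ring

lemma integrable_G' : Integrable (fun u : ℝ => Real.log (2 * Real.cosh u) - |u|) := by
  have : (fun u : ℝ => Real.log (2 * Real.cosh u) - |u|)
      = fun u : ℝ => Real.log (1 + Real.exp (-(2*|u|))) := by
    funext u; rw [log_two_cosh_eq u]; ring
  rw [this]; exact integrable_G

lemma continuous_H : Continuous (fun u : ℝ => Real.log (2 * Real.cosh u) - u * Real.tanh u) := by
  have h1 : Continuous (fun u : ℝ => 2 * Real.cosh u) := continuous_const.mul Real.continuous_cosh
  have h2 : Continuous (fun u : ℝ => Real.log (2 * Real.cosh u)) :=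
    h1.log (fun x => by positivity)
  have h3 : Continuous (fun u : ℝ => Real.tanh u) := by
    have : Continuous (fun u : ℝ => Real.sinh u / Real.cosh u) :=
      Real.continuous_sinh.div Real.continuous_cosh (fun x => (Real.cosh_pos x).ne')
    simpa [Real.tanh_eq_sinh_div_cosh] using this
  exact h2.sub (continuous_id.mul h3)

lemma integrable_H : Integrable (fun u : ℝ => Real.log (2 * Real.cosh u) - u * Real.tanh u) := by
  apply Integrable.mono' (integrable_exp_neg_abs'.const_mul 3)
    continuous_H.aestronglyMeasurable
  filter_upwards with u
  rw [Real.norm_eq_abs, abs_of_nonneg (H_nonneg u)]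
  exact H_le u

lemma integral_H : ∫ u : ℝ, (Real.log (2 * Real.cosh u) - u * Real.tanh u) = π^2/6 := by
  set G : ℝ → ℝ := fun u => Real.log (2 * Real.cosh u) - |u| with hG
  set H : ℝ → ℝ := fun u => Real.log (2 * Real.cosh u) - u * Real.tanh u with hH
  have hIG : Integrable G := integrable_G'
  have hIH : Integrable H := integrable_H
  have hID : Integrable (fun u => 2 * G u - H u) := (hIG.const_mul 2).sub hIH
  have hD : ∫ u : ℝ, (2 * G u - H u) = 0 - 0 :=
    integral_of_hasDerivAt_of_tendsto hasDerivAt_uG hID tendsto_uG_atBot tendsto_uG_atTop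
  have hGval : ∫ u : ℝ, G u = π^2/12 := by
    have : G = fun u : ℝ => Real.log (1 + Real.exp (-(2*|u|))) := by
      funext u; rw [hG]; simp only; rw [log_two_cosh_eq u]; ring
    rw [this]; exact integral_G
  have key : ∫ u : ℝ, H u = (∫ u : ℝ, 2 * G u) - ∫ u : ℝ, (2 * G u - H u) := by
    rw [← integral_sub (hIG.const_mul 2) hID]
    congr 1; funext u; ring
  rw [key, hD, integral_const_mul, hGval]
  ring

/-- The function `f_max(x) = (2√3/π) log(2 cosh((π/(2√3)) x))` is
1-Lipschitz, satisfies `f_max(x) > |x|` for all `x`, the area between its graph and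
that of `|·|` equals 1, and its energy `∫ φ(f_max'(x)) dx` equals `π/√3`, where
`φ(x) = log 2 - (1/2)((1+x)log(1+x)+(1-x)log(1-x))`. -/
theorem stmt19 (φ fmax : ℝ → ℝ)
    (hφ : ∀ x, φ x = Real.log 2 -
      (1 / 2) * ((1 + x) * Real.log (1 + x) + (1 - x) * Real.log (1 - x)))
    (hfmax : ∀ x, fmax x = (2 * Real.sqrt 3 / π) *
      Real.log (2 * Real.cosh ((π / (2 * Real.sqrt 3)) * x))) :
    LipschitzWith 1 fmax ∧
    (∀ x, |x| < fmax x) ∧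
    (∫ x : ℝ, (fmax x - |x|)) = 1 ∧
    (∀ x, HasDerivAt fmax (Real.tanh ((π / (2 * Real.sqrt 3)) * x)) x) ∧
    (∫ x : ℝ, φ (Real.tanh ((π / (2 * Real.sqrt 3)) * x))) = π / Real.sqrt 3 := by
  have hs3 : (0:ℝ) < Real.sqrt 3 := Real.sqrt_pos.2 (by norm_num)
  have h33 : Real.sqrt 3 * Real.sqrt 3 = 3 := Real.mul_self_sqrt (by norm_num)
  have hπ := Real.pi_pos
  set c : ℝ := π / (2 * Real.sqrt 3) with hcdef
  have hc : 0 < c := by positivity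
  have hcinv : 2 * Real.sqrt 3 / π = c⁻¹ := by
    rw [hcdef, inv_div]
  have hc2 : c^2 = π^2/12 := by
    rw [hcdef, div_pow, mul_pow]
    rw [show Real.sqrt 3 ^ 2 = 3 by rw [sq, h33]]
    norm_num
  have hfm : fmax = fun x => c⁻¹ * Real.log (2 * Real.cosh (c * x)) := by
    funext x; rw [hfmax x, hcinv]
  have habs_eq : ∀ x : ℝ, c⁻¹ * |c * x| = |x| := by
    intro x
    rw [abs_mul, abs_of_pos hc, ← mul_assoc, inv_mul_cancel₀ hc.ne', one_mul]
  -- part 4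
  have h4 : ∀ x, HasDerivAt fmax (Real.tanh (c * x)) x := by
    intro x
    rw [hfm]
    have h := (hasDerivAt_log_two_cosh c x).const_mul c⁻¹
    have : c⁻¹ * (c * Real.tanh (c * x)) = Real.tanh (c * x) := by
      rw [← mul_assoc, inv_mul_cancel₀ hc.ne', one_mul]
    rw [this] at h
    exact h
  -- part 1
  have h1 : LipschitzWith 1 fmax := by
    apply lipschitzWith_of_nnnorm_deriv_le (fun x => (h4 x).differentiableAt)
    intro x
    rw [(h4 x).deriv]
    rw [← NNReal.coe_le_coe, coe_nnnorm, Real.norm_eq_abs, NNReal.coe_one]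
    exact abs_tanh_le _
  -- part 2
  have h2 : ∀ x, |x| < fmax x := by
    intro x
    rw [hfm]
    simp only
    rw [log_two_cosh_eq (c * x), mul_add, habs_eq x]
    have hGpos : 0 < Real.log (1 + Real.exp (-(2*|c*x|))) :=
      Real.log_pos (by linarith [Real.exp_pos (-(2*|c*x|))])
    have := mul_pos (inv_pos.2 hc) hGpos
    linarith
  -- part 3
  have h3 : (∫ x : ℝ, (fmax x - |x|)) = 1 := by
    have hfun : (fun x => fmax x - |x|)
        = fun x => c⁻¹ * Real.log (1 + Real.exp (-(2*|c * x|))) := by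
      funext x
      rw [hfm]
      simp only
      rw [log_two_cosh_eq (c * x), mul_add, habs_eq x]
      ring
    rw [hfun, MeasureTheory.integral_const_mul,
      Measure.integral_comp_mul_left (fun u : ℝ => Real.log (1 + Real.exp (-(2*|u|)))) c,
      integral_G, smul_eq_mul, abs_of_pos (inv_pos.2 hc),
      show (π:ℝ)^2/12 = c^2 from hc2.symm]
    field_simp
  -- part 5
  have hpt : ∀ u : ℝ, φ (Real.tanh u) = Real.log (2 * Real.cosh u) - u * Real.tanh u := by
    intro u
    have hc0 := Real.cosh_pos u
    have hA : Real.exp u / Real.cosh u + Real.exp (-u) / Real.cosh u = 2 := by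
      rw [← add_div, div_eq_iff hc0.ne', Real.cosh_eq]
      ring
    have hB : Real.exp u / Real.cosh u - Real.exp (-u) / Real.cosh u = 2 * Real.tanh u := by
      rw [div_sub_div_same, Real.tanh_eq_sinh_div_cosh, Real.sinh_eq]
      field_simp
    have h1p : 1 + Real.tanh u = Real.exp u / Real.cosh u := by
      rw [Real.tanh_eq_sinh_div_cosh, ← Real.cosh_add_sinh u]
      field_simp
    have h1m : 1 - Real.tanh u = Real.exp (-u) / Real.cosh u := by
      rw [Real.tanh_eq_sinh_div_cosh, ← Real.cosh_sub_sinh u]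
      field_simp
    rw [hφ, h1p, h1m, Real.log_div (Real.exp_ne_zero u) hc0.ne',
      Real.log_div (Real.exp_ne_zero (-u)) hc0.ne', Real.log_exp, Real.log_exp,
      Real.log_mul two_ne_zero hc0.ne']
    linear_combination (-(u)/2) * hB + (Real.log (Real.cosh u)/2) * hA
  have h5 : (∫ x : ℝ, φ (Real.tanh (c * x))) = π / Real.sqrt 3 := by
    have hfun : (fun x => φ (Real.tanh (c * x)))
        = fun x => Real.log (2 * Real.cosh (c * x)) - (c * x) * Real.tanh (c * x) :=
      funext fun x => hpt (c * x)
    rw [hfun,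
      Measure.integral_comp_mul_left (fun u : ℝ => Real.log (2 * Real.cosh u) - u * Real.tanh u) c,
      integral_H, smul_eq_mul, abs_of_pos (inv_pos.2 hc), hcdef, inv_div]
    field_simp
    linear_combination 2*h33
  exact ⟨h1, h2, h3, h4, h5⟩
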